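/- arXiv:1807.08783 — 2 statements merged into one kernel-verified Lean document; each statement's English description precedes it below -/
import Mathlib

section
/- Let x ∉ D and let n ≥ 1 be such that g_n'(x) = 1. Let y_n be the smallest element of D_n greater than x. Then for every t with 0 < t < 2^{−n−5}, one has (T(y_n − t) − T(x))/(y_n − t − x) ≤ G_{n−1}'(x) + 2/5, where G_{n−1}'(x) = g_1'(x) + ⋯ + g_{n−1}'(x). -/
open MeasureTheory Filter Set

noncomputable section

/-- The set of dyadic numbers of level `n`: `{k / 2^n : k ∈ ℤ}`. -/
def Dset (n : ℕ) : Set ℝ := {y : ℝ | ∃ k : ℤ, y = (k : ℝ) / 2 ^ n}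

/-- The set of all dyadic numbers. -/
def Ddyadic : Set ℝ := ⋃ n, Dset n

/-- `g k x = dist(x, D_k)`. -/
def g (k : ℕ) (x : ℝ) : ℝ := Metric.infDist x (Dset k)

/-- The Takagi function `T x = ∑_{k=1}^∞ g_k(x)`. -/
def T (x : ℝ) : ℝ := ∑' k : ℕ, g (k + 1) x

/-- `G' n x = g_1'(x) + ⋯ + g_n'(x)` (so `G' 0 x = 0`). -/
def G' (n : ℕ) (x : ℝ) : ℝ := ∑ k ∈ Finset.range n, deriv (g (k + 1)) x

/-- `f` is approximately derivable at `x` with approximate derivative `L`: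
for every `ε > 0`, the relative measure of the set of points `y` in `(x - r, x + r)`,
`y ≠ x`, where `|(f y - f x - L (y - x)) / (y - x)| ≥ ε`, divided by `2r`,
tends to `0` as `r → 0⁺`. -/
def ApproxDerivAt (f : ℝ → ℝ) (x L : ℝ) : Prop :=
  ∀ ε > (0 : ℝ), Tendsto
    (fun r : ℝ => volume (Ioo (x - r) (x + r) ∩
        {y : ℝ | y ≠ x ∧ ε ≤ |(f y - f x - L * (y - x)) / (y - x)|}) /
      ENNReal.ofReal (2 * r))
    (nhdsWithin 0 (Ioi 0)) (nhds 0)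

namespace TakagiAux

lemma Dset_nonempty (j : ℕ) : (Dset j).Nonempty := ⟨0, 0, by simp⟩

lemma mem_Dset (j : ℕ) (k : ℤ) : ((k : ℝ) / 2 ^ j) ∈ Dset j := ⟨k, rfl⟩

lemma Dset_mono {i j : ℕ} (h : i ≤ j) : Dset i ⊆ Dset j := by
  obtain ⟨d, rfl⟩ : ∃ d, j = i + d := ⟨j - i, by omega⟩
  rintro z ⟨k, rfl⟩
  refine ⟨k * 2 ^ d, ?_⟩
  push_cast
  rw [pow_add]
  field_simp

lemma g_le_dist (j : ℕ) (y : ℝ) (k : ℤ) : g j y ≤ |y - (k : ℝ) / 2 ^ j| := by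
  have := Metric.infDist_le_dist_of_mem (x := y) (mem_Dset j k)
  rwa [Real.dist_eq] at this

lemma le_g {j : ℕ} {y d : ℝ} (h : ∀ k : ℤ, d ≤ |y - (k : ℝ) / 2 ^ j|) : d ≤ g j y := by
  by_contra hc
  push_neg at hc
  obtain ⟨z, hz, hdz⟩ := (Metric.infDist_lt_iff (Dset_nonempty j)).1 hc
  obtain ⟨k, rfl⟩ := hz
  rw [Real.dist_eq] at hdz
  exact absurd (h k) (not_le.2 hdz)

lemma g_nonneg (j : ℕ) (y : ℝ) : 0 ≤ g j y := Metric.infDist_nonneg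

lemma g_le_half (j : ℕ) (y : ℝ) : g j y ≤ ((2 : ℝ) ^ (j + 1))⁻¹ := by
  have hP : (0 : ℝ) < 2 ^ j := by positivity
  have h := g_le_dist j y (round ((2 : ℝ) ^ j * y))
  have h2 : y - (round ((2 : ℝ) ^ j * y) : ℝ) / 2 ^ j
      = (2 ^ j * y - round ((2 : ℝ) ^ j * y)) / 2 ^ j := by field_simp
  rw [h2, abs_div, abs_of_pos hP] at h
  have h3 := abs_sub_round ((2 : ℝ) ^ j * y)
  calc g j y ≤ |2 ^ j * y - (round ((2:ℝ) ^ j * y) : ℝ)| / 2 ^ j := h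
    _ ≤ (1 / 2) / 2 ^ j := by gcongr
    _ = ((2 : ℝ) ^ (j + 1))⁻¹ := by rw [pow_succ]; ring

lemma g_eq_left {j : ℕ} {y : ℝ} {R : ℤ} (h1 : (R : ℝ) ≤ 2 ^ j * y)
    (h2 : 2 ^ j * y ≤ R + 1 / 2) : g j y = y - (R : ℝ) / 2 ^ j := by
  have hP : (0 : ℝ) < 2 ^ j := by positivity
  have hy1 : (R : ℝ) / 2 ^ j ≤ y := by rw [div_le_iff₀ hP]; nlinarith
  have hy2 : y ≤ ((R : ℝ) + 1 / 2) / 2 ^ j := by rw [le_div_iff₀ hP]; nlinarith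
  apply le_antisymm
  · have := g_le_dist j y R
    rwa [abs_of_nonneg (by linarith)] at this
  · apply le_g
    intro k
    rcases le_or_gt (k : ℝ) R with hk | hk
    · have hkk : (k : ℝ) / 2 ^ j ≤ (R : ℝ) / 2 ^ j := by gcongr
      rw [abs_of_nonneg (by linarith)]
      linarith
    · have hk' : (R : ℝ) + 1 ≤ k := by exact_mod_cast Int.add_one_le_of_lt (by exact_mod_cast hk)
      have hkk : ((R : ℝ) + 1) / 2 ^ j ≤ (k : ℝ) / 2 ^ j := by gcongr
      have e1 : ((R : ℝ) + 1 / 2) / 2 ^ j * 2 = (R : ℝ) / 2 ^ j + ((R : ℝ) + 1) / 2 ^ j := by ring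
      rw [abs_sub_comm, abs_of_nonneg (by linarith)]
      linarith

lemma g_eq_right {j : ℕ} {y : ℝ} {R : ℤ} (h1 : (R : ℝ) - 1 / 2 ≤ 2 ^ j * y)
    (h2 : 2 ^ j * y ≤ R) : g j y = (R : ℝ) / 2 ^ j - y := by
  have hP : (0 : ℝ) < 2 ^ j := by positivity
  have hy1 : y ≤ (R : ℝ) / 2 ^ j := by rw [le_div_iff₀ hP]; nlinarith
  have hy2 : ((R : ℝ) - 1 / 2) / 2 ^ j ≤ y := by rw [div_le_iff₀ hP]; nlinarith
  apply le_antisymm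
  · have := g_le_dist j y R
    rwa [abs_sub_comm, abs_of_nonneg (by linarith)] at this
  · apply le_g
    intro k
    rcases le_or_gt (R : ℝ) k with hk | hk
    · have hkk : (R : ℝ) / 2 ^ j ≤ (k : ℝ) / 2 ^ j := by gcongr
      rw [abs_sub_comm, abs_of_nonneg (by linarith)]
      linarith
    · have hk' : (k : ℝ) ≤ (R : ℝ) - 1 := by
        have : k + 1 ≤ R := Int.add_one_le_of_lt (by exact_mod_cast hk)
        have : ((k:ℝ) + 1) ≤ (R:ℝ) := by exact_mod_cast this
        linarith
      have hkk : (k : ℝ) / 2 ^ j ≤ ((R : ℝ) - 1) / 2 ^ j := by gcongr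
      have e1 : ((R : ℝ) - 1 / 2) / 2 ^ j * 2 = (R : ℝ) / 2 ^ j + ((R : ℝ) - 1) / 2 ^ j := by ring
      rw [abs_of_nonneg (by linarith)]
      linarith

lemma summable_pow_inv (c : ℕ) : Summable (fun i : ℕ => ((2 : ℝ) ^ (i + c))⁻¹) := by
  have he : ∀ i : ℕ, ((2 : ℝ) ^ (i + c))⁻¹ = ((2 : ℝ) ^ c)⁻¹ * (2⁻¹ : ℝ) ^ i := by
    intro i
    rw [pow_add, mul_inv, inv_pow]
    ring
  simp only [he]
  exact (summable_geometric_of_lt_one (by norm_num) (by norm_num)).mul_left _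

lemma tsum_pow_inv (c : ℕ) : ∑' i : ℕ, ((2 : ℝ) ^ (i + c))⁻¹ = 2 * ((2 : ℝ) ^ c)⁻¹ := by
  have he : ∀ i : ℕ, ((2 : ℝ) ^ (i + c))⁻¹ = ((2 : ℝ) ^ c)⁻¹ * (2⁻¹ : ℝ) ^ i := by
    intro i
    rw [pow_add, mul_inv, inv_pow]
    ring
  rw [tsum_congr he, tsum_mul_left, tsum_geometric_of_lt_one (by norm_num) (by norm_num)]
  norm_num
  ring

lemma summable_g (c : ℕ) (y : ℝ) : Summable (fun k : ℕ => g (k + c) y) := by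
  refine Summable.of_nonneg_of_le (fun k => g_nonneg _ _) (fun k => ?_) (summable_pow_inv (c+1))
  have h := g_le_half (k + c) y
  have : k + c + 1 = k + (c + 1) := by omega
  rwa [this] at h

lemma deriv_affine {f : ℝ → ℝ} {p q x s c : ℝ} (hx : x ∈ Ioo p q)
    (h : ∀ y ∈ Ioo p q, f y = s * (y - c)) : deriv f x = s := by
  have he : f =ᶠ[nhds x] (fun y => s * (y - c)) :=
    Filter.eventually_of_mem (Ioo_mem_nhds hx.1 hx.2) h
  have hd : HasDerivAt (fun y => s * (y - c)) s x := by
    simpa using ((hasDerivAt_id x).sub_const c).const_mul s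
  exact (hd.congr_of_eventuallyEq he).deriv

lemma g_affine {j : ℕ} {p q x : ℝ} (hgap : ∀ z ∈ Dset (j + 1), z ∉ Ioo p q)
    (hx : x ∈ Ioo p q) :
    ∃ s : ℝ, (s = 1 ∨ s = -1) ∧ deriv (g j) x = s ∧
      ∀ y ∈ Ioo p q, g j y - g j x = s * (y - x) := by
  have hP : (0 : ℝ) < 2 ^ j := by positivity
  have hP1 : (0 : ℝ) < 2 ^ (j + 1) := by positivity
  set R : ℤ := round ((2 : ℝ) ^ j * x) with hR
  have hmemR : ((R : ℝ) / 2 ^ j) ∈ Dset (j + 1) := by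
    refine ⟨2 * R, ?_⟩
    push_cast
    rw [pow_succ]
    field_simp
  have hmemM : (((R : ℝ) + 1 / 2) / 2 ^ j) ∈ Dset (j + 1) := by
    refine ⟨2 * R + 1, ?_⟩
    push_cast
    rw [pow_succ]
    field_simp
  have hmemM' : (((R : ℝ) - 1 / 2) / 2 ^ j) ∈ Dset (j + 1) := by
    refine ⟨2 * R - 1, ?_⟩
    push_cast
    rw [pow_succ]
    field_simp
  have habs := abs_le.1 (abs_sub_round ((2 : ℝ) ^ j * x))
  have hne : (2 : ℝ) ^ j * x ≠ R := by
    intro hEq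
    have : x = (R : ℝ) / 2 ^ j := by field_simp [mul_comm] at hEq ⊢; linarith
    exact hgap _ hmemR (this ▸ hx)
  rcases hne.lt_or_gt with hlt | hlt
  · -- 2^j x < R : slope -1
    have hlt2 : (R : ℝ) - 1 / 2 < 2 ^ j * x := by
      rcases eq_or_lt_of_le habs.1 with hEq | h
      · exfalso
        have : x = ((R : ℝ) - 1 / 2) / 2 ^ j := by
          rw [eq_div_iff hP.ne']; linarith
        exact hgap _ hmemM' (this ▸ hx)
      · linarith
    have hval : ∀ y ∈ Ioo p q, g j y = (R : ℝ) / 2 ^ j - y := by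
      intro y hy
      have hy1 : (R : ℝ) - 1 / 2 ≤ 2 ^ j * y := by
        by_contra hcon
        push_neg at hcon
        have hw : ((R : ℝ) - 1 / 2) / 2 ^ j ∈ Ioo p q := by
          constructor
          · have : y < ((R : ℝ) - 1 / 2) / 2 ^ j := by
              rw [lt_div_iff₀ hP]; linarith [mul_comm y ((2:ℝ)^j)]
            linarith [hy.1]
          · have : ((R : ℝ) - 1 / 2) / 2 ^ j < x := by
              rw [div_lt_iff₀ hP]; linarith [mul_comm x ((2:ℝ)^j)]
            linarith [hx.2]
        exact hgap _ hmemM' hw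
      have hy2 : 2 ^ j * y ≤ R := by
        by_contra hcon
        push_neg at hcon
        have hw : (R : ℝ) / 2 ^ j ∈ Ioo p q := by
          constructor
          · have : x < (R : ℝ) / 2 ^ j := by
              rw [lt_div_iff₀ hP]; linarith [mul_comm x ((2:ℝ)^j)]
            linarith [hx.1]
          · have : (R : ℝ) / 2 ^ j < y := by
              rw [div_lt_iff₀ hP]; linarith [mul_comm y ((2:ℝ)^j)]
            linarith [hy.2]
        exact hgap _ hmemR hw
      exact g_eq_right hy1 hy2
    refine ⟨-1, Or.inr rfl, ?_, ?_⟩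
    · refine deriv_affine hx (c := (R : ℝ) / 2 ^ j) (fun y hy => ?_)
      rw [hval y hy]; ring
    · intro y hy
      rw [hval y hy, hval x hx]; ring
  · -- R < 2^j x : slope 1
    have hlt2 : 2 ^ j * x < (R : ℝ) + 1 / 2 := by
      rcases eq_or_lt_of_le habs.2 with hEq | h
      · exfalso
        have : x = ((R : ℝ) + 1 / 2) / 2 ^ j := by
          rw [eq_div_iff hP.ne']; linarith
        exact hgap _ hmemM (this ▸ hx)
      · linarith
    have hval : ∀ y ∈ Ioo p q, g j y = y - (R : ℝ) / 2 ^ j := by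
      intro y hy
      have hy1 : (R : ℝ) ≤ 2 ^ j * y := by
        by_contra hcon
        push_neg at hcon
        have hw : (R : ℝ) / 2 ^ j ∈ Ioo p q := by
          constructor
          · have : y < (R : ℝ) / 2 ^ j := by
              rw [lt_div_iff₀ hP]; linarith [mul_comm y ((2:ℝ)^j)]
            linarith [hy.1]
          · have : (R : ℝ) / 2 ^ j < x := by
              rw [div_lt_iff₀ hP]; linarith [mul_comm x ((2:ℝ)^j)]
            linarith [hx.2]
        exact hgap _ hmemR hw
      have hy2 : 2 ^ j * y ≤ (R : ℝ) + 1 / 2 := by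
        by_contra hcon
        push_neg at hcon
        have hw : ((R : ℝ) + 1 / 2) / 2 ^ j ∈ Ioo p q := by
          constructor
          · have : x < ((R : ℝ) + 1 / 2) / 2 ^ j := by
              rw [lt_div_iff₀ hP]; linarith [mul_comm x ((2:ℝ)^j)]
            linarith [hx.1]
          · have : ((R : ℝ) + 1 / 2) / 2 ^ j < y := by
              rw [div_lt_iff₀ hP]; linarith [mul_comm y ((2:ℝ)^j)]
            linarith [hy.2]
        exact hgap _ hmemM hw
      exact g_eq_left hy1 hy2
    refine ⟨1, Or.inl rfl, ?_, ?_⟩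
    · refine deriv_affine hx (c := (R : ℝ) / 2 ^ j) (fun y hy => ?_)
      rw [hval y hy]; ring
    · intro y hy
      rw [hval y hy, hval x hx]; ring

lemma keyNat : ∀ d : ℕ, 5 * (d + 4) + 17 ≤ 2 ^ (d + 6) := by
  intro d
  induction d with
  | zero => norm_num
  | succ d ih => rw [pow_succ]; omega

end TakagiAux

set_option maxHeartbeats 1000000 in
open TakagiAux in
theorem takagi_slope_upper_bound (x : ℝ) (hx : x ∉ Ddyadic)
    (n : ℕ) (hn : 1 ≤ n) (hg : deriv (g n) x = 1)
    (yn : ℝ) (hyn : yn ∈ Dset n) (hxy : x < yn)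
    (hmin : ∀ z ∈ Dset n, x < z → yn ≤ z) :
    ∀ t : ℝ, 0 < t → t < ((2 : ℝ) ^ (n + 5))⁻¹ →
      (T (yn - t) - T x) / (yn - t - x) ≤ G' (n - 1) x + 2 / 5 := by
  intro t ht htlt
  have hn1 : n - 1 + 1 = n := by omega
  have hPn : (0 : ℝ) < 2 ^ n := by positivity
  have hPn1 : (0 : ℝ) < 2 ^ (n + 1) := by positivity
  have hPn5 : (0 : ℝ) < 2 ^ (n + 5) := by positivity
  obtain ⟨m, hm⟩ := hyn
  have notDy : ∀ j, x ∉ Dset j := fun j hj => hx (mem_iUnion.2 ⟨j, hj⟩)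
  -- t is small
  have ht15 : ((2:ℝ) ^ (n+5))⁻¹ ≤ ((2:ℝ) ^ (n+1))⁻¹ := by
    apply inv_anti₀ hPn1
    exact pow_le_pow_right₀ (by norm_num) (by omega)
  have ht1n : ((2:ℝ) ^ (n+1))⁻¹ ≤ ((2:ℝ) ^ n)⁻¹ := by
    apply inv_anti₀ hPn
    exact pow_le_pow_right₀ (by norm_num) (by omega)
  have htn1 : t < ((2:ℝ) ^ (n+1))⁻¹ := lt_of_lt_of_le htlt ht15
  have htn : t < ((2:ℝ) ^ n)⁻¹ := lt_of_lt_of_le htn1 ht1n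
  -- no points of Dset n in the open interval (yn - 2^{-n}, yn)
  have hgap : ∀ z ∈ Dset n, z ∉ Ioo (yn - ((2:ℝ) ^ n)⁻¹) yn := by
    rintro z ⟨k, rfl⟩ ⟨h1, h2⟩
    have hkm : (k : ℝ) < m := by
      rw [hm] at h2
      have := (div_lt_div_iff₀ hPn hPn).1 h2
      nlinarith
    have hkm' : (k : ℝ) ≤ (m : ℝ) - 1 := by
      have : k + 1 ≤ m := Int.add_one_le_of_lt (by exact_mod_cast hkm)
      have : ((k:ℝ) + 1) ≤ (m:ℝ) := by exact_mod_cast this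
      linarith
    have : (k : ℝ) / 2 ^ n ≤ ((m : ℝ) - 1) / 2 ^ n := by gcongr
    have he : ((m : ℝ) - 1) / 2 ^ n = yn - ((2:ℝ) ^ n)⁻¹ := by rw [hm]; ring
    rw [he] at this
    linarith
  -- x is above yn - 2^{-n}
  have hxlow : yn - ((2:ℝ) ^ n)⁻¹ < x := by
    by_contra hcon
    push_neg at hcon
    have hzmem : yn - ((2:ℝ) ^ n)⁻¹ ∈ Dset n := by
      refine ⟨m - 1, ?_⟩
      rw [hm]; push_cast; ring
    rcases eq_or_lt_of_le hcon with hEq | hlt'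
    · exact notDy n (hEq ▸ hzmem)
    · have h1 := hmin _ hzmem hlt'
      have h2 : (0:ℝ) < ((2:ℝ) ^ n)⁻¹ := by positivity
      linarith
  have hxI : x ∈ Ioo (yn - ((2:ℝ) ^ n)⁻¹) yn := ⟨hxlow, hxy⟩
  have huI : yn - t ∈ Ioo (yn - ((2:ℝ) ^ n)⁻¹) yn := ⟨by linarith, by linarith⟩
  -- value of g n on the right half
  have hm' : (m : ℝ) = 2 ^ n * yn := by rw [hm]; field_simp
  have hhalf : (2:ℝ) ^ n * ((2:ℝ) ^ (n+1))⁻¹ = 1 / 2 := by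
    rw [pow_succ, mul_inv, ← mul_assoc, mul_inv_cancel₀ hPn.ne', one_mul, one_div]
  have hright : ∀ y : ℝ, yn - ((2:ℝ) ^ (n+1))⁻¹ ≤ y → y ≤ yn → g n y = yn - y := by
    intro y hy1 hy2
    have h1 : (m : ℝ) - 1 / 2 ≤ 2 ^ n * y := by
      have : (2:ℝ) ^ n * (yn - ((2:ℝ) ^ (n+1))⁻¹) ≤ 2 ^ n * y := by gcongr
      rw [mul_sub, hhalf] at this
      linarith [hm']
    have h2 : (2:ℝ) ^ n * y ≤ (m : ℝ) := by
      have : (2:ℝ) ^ n * y ≤ 2 ^ n * yn := by gcongr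
      linarith [hm']
    have := g_eq_right (j := n) (R := m) (by exact_mod_cast h1) (by exact_mod_cast h2)
    rw [this, hm]
  -- g n (yn - t) = t
  have hgut : g n (yn - t) = t := by
    have := hright (yn - t) (by linarith) (by linarith)
    rw [this]; ring
  -- x is in the left half
  have hxhalf : x < yn - ((2:ℝ) ^ (n+1))⁻¹ := by
    by_contra hcon
    push_neg at hcon
    have hmidmem : yn - ((2:ℝ) ^ (n+1))⁻¹ ∈ Dset (n+1) := by
      refine ⟨2 * m - 1, ?_⟩
      rw [hm]
      push_cast
      rw [pow_succ]
      field_simp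
    have hne : yn - ((2:ℝ) ^ (n+1))⁻¹ ≠ x := fun hEq => notDy (n+1) (hEq ▸ hmidmem)
    have hlt : yn - ((2:ℝ) ^ (n+1))⁻¹ < x := lt_of_le_of_ne hcon hne
    have he : g n =ᶠ[nhds x] (fun y => yn - y) :=
      Filter.eventually_of_mem (Ioo_mem_nhds hlt hxy)
        (fun y hy => hright y hy.1.le hy.2.le)
    have hd : HasDerivAt (fun y : ℝ => yn - y) (-1) x := by
      simpa using (hasDerivAt_id x).const_sub yn
    have : deriv (g n) x = -1 := (hd.congr_of_eventuallyEq he).deriv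
    rw [hg] at this
    norm_num at this
  -- value of g n at x
  have hgx : g n x = x - (yn - ((2:ℝ) ^ n)⁻¹) := by
    have h1 : ((m - 1 : ℤ) : ℝ) ≤ 2 ^ n * x := by
      push_cast
      have : (2:ℝ) ^ n * (yn - ((2:ℝ) ^ n)⁻¹) ≤ 2 ^ n * x := by gcongr <;> exact hxlow.le
      rw [mul_sub] at this
      have h2 : (2:ℝ) ^ n * ((2:ℝ)^n)⁻¹ = 1 := mul_inv_cancel₀ hPn.ne'
      rw [h2] at this
      linarith [hm']
    have h2 : 2 ^ n * x ≤ ((m - 1 : ℤ) : ℝ) + 1 / 2 := by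
      push_cast
      have : (2:ℝ) ^ n * x ≤ 2 ^ n * (yn - ((2:ℝ) ^ (n+1))⁻¹) := by gcongr <;> exact hxhalf.le
      rw [mul_sub, hhalf] at this
      linarith [hm']
    have := g_eq_left h1 h2
    rw [this, hm]
    push_cast
    ring
  -- derivatives at lower levels
  have hlevel : ∀ k ∈ Finset.range (n - 1), g (k+1) (yn - t) - g (k+1) x
      = deriv (g (k+1)) x * ((yn - t) - x) := by
    intro k hk
    have hk' : k < n - 1 := Finset.mem_range.1 hk
    have hsub : Dset (k + 1 + 1) ⊆ Dset n := Dset_mono (by omega)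
    obtain ⟨s, _, hderiv, hdiff⟩ := g_affine (j := k + 1)
      (fun z hz => hgap z (hsub hz)) hxI
    rw [hdiff (yn - t) huI, hderiv]
  -- summability
  have S_u : Summable (fun k : ℕ => g (k + 1) (yn - t)) := summable_g 1 (yn - t)
  have S_x : Summable (fun k : ℕ => g (k + 1) x) := summable_g 1 x
  have SF : Summable (fun k : ℕ => g (k + 1) (yn - t) - g (k + 1) x) := S_u.sub S_x
  -- choose M with 2^{-(M+1)} ≤ t < 2^{-M}
  obtain ⟨e, he1, he2⟩ := exists_mem_Ico_zpow ht one_lt_two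
  have hepow : (2:ℝ) ^ ((-(n:ℤ)) - 5) = ((2:ℝ) ^ (n + 5))⁻¹ := by
    have e : (-(n:ℤ)) - 5 = -((n + 5 : ℕ) : ℤ) := by push_cast; ring
    rw [e, zpow_neg, zpow_natCast]
  have helt : e < -(n:ℤ) - 5 := by
    by_contra hcon
    push_neg at hcon
    have : (2:ℝ) ^ ((-(n:ℤ)) - 5) ≤ (2:ℝ) ^ e := zpow_le_zpow_right₀ (by norm_num) hcon
    rw [hepow] at this
    linarith
  obtain ⟨M, hMe⟩ : ∃ M : ℕ, (M : ℤ) = -e - 1 :=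
    ⟨(-e - 1).toNat, Int.toNat_of_nonneg (by omega)⟩
  have hMn : n + 5 ≤ M := by omega
  have htM : t < ((2:ℝ) ^ M)⁻¹ := by
    have he' : (2:ℝ) ^ (e + 1) = ((2:ℝ) ^ M)⁻¹ := by
      rw [← zpow_natCast (2:ℝ) M, ← zpow_neg]
      congr 1
      omega
    rw [← he']
    exact he2
  have htM2 : ((2:ℝ) ^ (M + 1))⁻¹ ≤ t := by
    have he' : (2:ℝ) ^ e = ((2:ℝ) ^ (M + 1))⁻¹ := by
      rw [← zpow_natCast (2:ℝ) (M + 1), ← zpow_neg]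
      congr 1
      push_cast
      omega
    rw [← he']
    exact he1
  obtain ⟨J, hMJ⟩ : ∃ J : ℕ, M = J + n + 1 := ⟨M - n - 1, by omega⟩
  have hJ4 : 4 ≤ J := by omega
  -- bound on g j (yn - t) for j ≥ n
  have hgu : ∀ j : ℕ, n ≤ j → g j (yn - t) ≤ t := by
    intro j hj
    have hmem : yn ∈ Dset j := Dset_mono hj ⟨m, hm⟩
    have := Metric.infDist_le_dist_of_mem (x := yn - t) hmem
    rw [Real.dist_eq] at this
    calc g j (yn - t) ≤ |yn - t - yn| := this
      _ = t := by rw [abs_of_nonpos (by linarith)]; ring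
  -- tail bound
  have tail_bound : ∑' k : ℕ, (g (k + n + 1) (yn - t) - g (k + n + 1) x)
      ≤ (J : ℝ) * t + 2 * t := by
    have step1 : ∑' k : ℕ, (g (k + n + 1) (yn - t) - g (k + n + 1) x)
        ≤ ∑' k : ℕ, g (k + (n + 1)) (yn - t) := by
      apply Summable.tsum_le_tsum
      · intro k
        have e1 : k + n + 1 = k + (n + 1) := by omega
        rw [e1]
        exact sub_le_self _ (g_nonneg _ _)
      · exact (summable_nat_add_iff n).2 SF
      · exact summable_g (n + 1) (yn - t)
    have step2 : ∑' k : ℕ, g (k + (n + 1)) (yn - t)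
        = (∑ k ∈ Finset.range J, g (k + (n + 1)) (yn - t))
          + ∑' k : ℕ, g (k + J + (n + 1)) (yn - t) :=
      (Summable.sum_add_tsum_nat_add J (summable_g (n + 1) (yn - t))).symm
    have step3 : (∑ k ∈ Finset.range J, g (k + (n + 1)) (yn - t)) ≤ (J : ℝ) * t := by
      have := Finset.sum_le_card_nsmul (Finset.range J)
        (fun k => g (k + (n + 1)) (yn - t)) t (fun k _ => hgu _ (by omega))
      rwa [Finset.card_range, nsmul_eq_mul] at this
    have step4 : ∑' k : ℕ, g (k + J + (n + 1)) (yn - t) ≤ 2 * t := by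
      have hb : ∀ k : ℕ, g (k + J + (n + 1)) (yn - t) ≤ ((2:ℝ) ^ (k + (J + n + 2)))⁻¹ := by
        intro k
        have h := g_le_half (k + J + (n + 1)) (yn - t)
        have e1 : k + J + (n + 1) + 1 = k + (J + n + 2) := by omega
        rwa [e1] at h
      have hle : ∑' k : ℕ, g (k + J + (n + 1)) (yn - t)
          ≤ ∑' k : ℕ, ((2:ℝ) ^ (k + (J + n + 2)))⁻¹ := by
        apply Summable.tsum_le_tsum hb
        · exact (summable_nat_add_iff J).2 (summable_g (n + 1) (yn - t))
        · exact summable_pow_inv _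
      rw [tsum_pow_inv] at hle
      have e2 : (2:ℝ) ^ (J + n + 2) = 2 ^ M * 2 := by
        rw [← pow_succ]
        congr 1
        omega
      have e3 : 2 * ((2:ℝ) ^ M * 2)⁻¹ = ((2:ℝ) ^ M)⁻¹ := by
        rw [mul_comm ((2:ℝ) ^ M) 2, mul_inv, ← mul_assoc,
          mul_inv_cancel₀ (two_ne_zero), one_mul]
      rw [e2, e3] at hle
      have e4 : ((2:ℝ) ^ M)⁻¹ ≤ 2 * t := by
        have e5 : (2:ℝ) ^ (M + 1) = 2 ^ M * 2 := by rw [pow_succ]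
        have h5 : ((2:ℝ) ^ M * 2)⁻¹ ≤ t := by rw [← e5]; exact htM2
        have hPM : (0:ℝ) < 2 ^ M := by positivity
        rw [mul_inv] at h5
        calc ((2:ℝ) ^ M)⁻¹ = 2 * (((2:ℝ)^M)⁻¹ * 2⁻¹) := by ring
          _ ≤ 2 * t := by linarith
      linarith
    linarith
  -- decompose T (yn - t) - T x
  have hTdiff : T (yn - t) - T x = ∑' k : ℕ, (g (k + 1) (yn - t) - g (k + 1) x) :=
    (Summable.tsum_sub S_u S_x).symm
  have hsplit : ∑' k : ℕ, (g (k + 1) (yn - t) - g (k + 1) x)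
      = (∑ k ∈ Finset.range n, (g (k + 1) (yn - t) - g (k + 1) x))
        + ∑' k : ℕ, (g (k + n + 1) (yn - t) - g (k + n + 1) x) :=
    (Summable.sum_add_tsum_nat_add n SF).symm
  have hfin : (∑ k ∈ Finset.range n, (g (k + 1) (yn - t) - g (k + 1) x))
      = (∑ k ∈ Finset.range (n - 1), (g (k + 1) (yn - t) - g (k + 1) x))
        + (g n (yn - t) - g n x) := by
    conv_lhs => rw [← hn1]
    rw [Finset.sum_range_succ, hn1]
  have hfin2 : (∑ k ∈ Finset.range (n - 1), (g (k + 1) (yn - t) - g (k + 1) x))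
      = G' (n - 1) x * ((yn - t) - x) := by
    rw [Finset.sum_congr rfl hlevel, ← Finset.sum_mul]
    rfl
  -- positivity of the increment
  have hh_pos : 0 < yn - t - x := by
    have : ((2:ℝ) ^ (n+1))⁻¹ > 0 := by positivity
    linarith
  have hh_ub : yn - t - x < ((2:ℝ) ^ n)⁻¹ - t := by linarith
  -- key numeric inequality
  have keyQ : ((J : ℝ) + 17/5) * t ≤ 2/5 * ((2:ℝ) ^ n)⁻¹ := by
    have hcast : (5 * (J : ℝ) + 17) ≤ (2:ℝ) ^ (J + 2) := by
      obtain ⟨d, rfl⟩ : ∃ d, J = d + 4 := ⟨J - 4, by omega⟩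
      have h1 := keyNat d
      have h2 : ((5 * (d + 4) + 17 : ℕ) : ℝ) ≤ ((2 ^ (d + 6) : ℕ) : ℝ) := by exact_mod_cast h1
      push_cast at h2
      have e1 : d + 4 + 2 = d + 6 := by omega
      rw [e1]
      push_cast
      linarith
    have hPJ : (0:ℝ) < 2 ^ (J + 1) := by positivity
    have key2 : ((J : ℝ) + 17/5) * ((2:ℝ) ^ (J + 1))⁻¹ ≤ 2/5 := by
      rw [← div_eq_mul_inv, div_le_iff₀ hPJ]
      have e6 : (2:ℝ) ^ (J + 2) = 2 * 2 ^ (J + 1) := by rw [pow_succ]; ring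
      linarith [hcast, e6]
    have h2M : (2:ℝ) ^ M = 2 ^ n * 2 ^ (J + 1) := by
      rw [← pow_add]
      congr 1
      omega
    have step : ((J : ℝ) + 17/5) * ((2:ℝ) ^ M)⁻¹ ≤ 2/5 * ((2:ℝ) ^ n)⁻¹ := by
      rw [h2M, mul_inv]
      have h7 := mul_le_mul_of_nonneg_right key2 (inv_nonneg.2 hPn.le)
      calc ((J : ℝ) + 17/5) * (((2:ℝ) ^ n)⁻¹ * ((2:ℝ) ^ (J+1))⁻¹)
          = ((J : ℝ) + 17/5) * ((2:ℝ) ^ (J+1))⁻¹ * ((2:ℝ) ^ n)⁻¹ := by ring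
        _ ≤ 2/5 * ((2:ℝ) ^ n)⁻¹ := h7
    have hJnn : (0:ℝ) ≤ (J : ℝ) + 17/5 := by positivity
    calc ((J : ℝ) + 17/5) * t ≤ ((J : ℝ) + 17/5) * ((2:ℝ) ^ M)⁻¹ :=
          mul_le_mul_of_nonneg_left htM.le hJnn
      _ ≤ 2/5 * ((2:ℝ) ^ n)⁻¹ := step
  have keyQ' : (J : ℝ) * t + 17/5 * t ≤ 2/5 * ((2:ℝ) ^ n)⁻¹ := by
    have e : ((J : ℝ) + 17/5) * t = (J : ℝ) * t + 17/5 * t := by ring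
    linarith [keyQ]
  -- final assembly
  rw [div_le_iff₀ hh_pos]
  have total : T (yn - t) - T x ≤ G' (n - 1) x * ((yn - t) - x)
      + (t - (x - (yn - ((2:ℝ) ^ n)⁻¹))) + ((J : ℝ) * t + 2 * t) := by
    rw [hTdiff, hsplit, hfin, hfin2, hgut, hgx]
    linarith [tail_bound]
  have expand : (G' (n - 1) x + 2/5) * (yn - t - x)
      = G' (n - 1) x * ((yn - t) - x) + 2/5 * (yn - t - x) := by ring
  linarith [total, keyQ', hh_ub, expand]
end
end

section
/- Let x ∉ D and let n ≥ 1 be such that g_n'(x) = 1. Then μ({y : 0 < |x − y| < 2^{−n} and (T(y) − T(x))/(y − x) ≤ G_{n−1}'(x) + 2/5}) ≥ 2^{−(n+5)}, where μ denotes Lebesgue measure on ℝ and G_{n−1}'(x) = g_1'(x) + ⋯ + g_{n−1}'(x) (with G_0'(x) = 0). -/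
open MeasureTheory Filter Set

noncomputable section

lemma mem_Dset (k : ℕ) (j : ℤ) : ((j:ℝ)/2^k) ∈ Dset k := ⟨j, rfl⟩

lemma Dset_nonempty (k : ℕ) : (Dset k).Nonempty := ⟨0, 0, by norm_num⟩

lemma g_nonneg (k : ℕ) (t : ℝ) : 0 ≤ g k t := Metric.infDist_nonneg

lemma g_le_dist (k : ℕ) (j : ℤ) (t : ℝ) : g k t ≤ |t - (j:ℝ)/2^k| := by
  simpa [g, Real.dist_eq] using Metric.infDist_le_dist_of_mem (mem_Dset k j)

lemma le_g (k : ℕ) (t d : ℝ) (h : ∀ j : ℤ, d ≤ |t - (j:ℝ)/2^k|) : d ≤ g k t := by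
  by_contra hlt
  push_neg at hlt
  obtain ⟨y, ⟨j, rfl⟩, hy⟩ := (Metric.infDist_lt_iff (Dset_nonempty k)).1 hlt
  rw [Real.dist_eq] at hy
  exact absurd (h j) (by linarith)

lemma abs_sub_div_pow (k : ℕ) (j : ℤ) (t : ℝ) :
    |t - (j:ℝ)/2^k| = |2^k * t - j| / 2^k := by
  have hp : (0:ℝ) < 2^k := by positivity
  rw [show t - (j:ℝ)/2^k = (2^k*t - j)/2^k by field_simp, abs_div, abs_of_pos hp]

lemma g_eq_left (k : ℕ) (q : ℤ) (t : ℝ) (h1 : (q:ℝ) ≤ 2^k * t) (h2 : 2^k * t ≤ q + 1/2) :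
    g k t = t - (q:ℝ)/2^k := by
  have hp : (0:ℝ) < 2^k := by positivity
  apply le_antisymm
  · refine (g_le_dist k q t).trans_eq ?_
    rw [abs_sub_div_pow, abs_of_nonneg (by linarith)]
    field_simp
  · apply le_g
    intro j
    rw [abs_sub_div_pow, show t - (q:ℝ)/2^k = (2^k*t - q)/2^k by field_simp,
      div_le_div_iff_of_pos_right hp]
    rcases le_or_gt j q with hj | hj
    · have hj' : (j:ℝ) ≤ q := by exact_mod_cast hj
      have := le_abs_self (2^k*t - (j:ℝ))
      linarith
    · have hj' : (q:ℝ) + 1 ≤ j := by exact_mod_cast hj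
      have := neg_le_abs (2^k*t - (j:ℝ))
      linarith

lemma g_eq_right (k : ℕ) (q : ℤ) (t : ℝ) (h1 : (q:ℝ) + 1/2 ≤ 2^k * t) (h2 : 2^k * t ≤ q + 1) :
    g k t = ((q:ℝ)+1)/2^k - t := by
  have hp : (0:ℝ) < 2^k := by positivity
  have hcast : (((q+1:ℤ)):ℝ) = (q:ℝ) + 1 := by push_cast; ring
  apply le_antisymm
  · refine (g_le_dist k (q+1) t).trans_eq ?_
    rw [abs_sub_div_pow, hcast, abs_of_nonpos (by linarith)]
    field_simp
    try ring
  · apply le_g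
    intro j
    rw [abs_sub_div_pow, show ((q:ℝ)+1)/2^k - t = -(2^k*t - ((q:ℝ)+1))/2^k by field_simp; ring,
      div_le_div_iff_of_pos_right hp]
    rcases le_or_gt j q with hj | hj
    · have hj' : (j:ℝ) ≤ q := by exact_mod_cast hj
      have := le_abs_self (2^k*t - (j:ℝ))
      linarith
    · have hj' : (q:ℝ) + 1 ≤ j := by exact_mod_cast hj
      have := neg_le_abs (2^k*t - (j:ℝ))
      linarith

lemma g_le_half (k : ℕ) (t : ℝ) : g k t ≤ (2^(k+1))⁻¹ := by
  have hp : (0:ℝ) < 2^k := by positivity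
  refine (g_le_dist k (round (2^k * t)) t).trans ?_
  rw [abs_sub_div_pow]
  calc |2^k*t - (round ((2:ℝ)^k*t) : ℝ)|/2^k ≤ (1/2)/2^k := by
        gcongr
        exact abs_sub_round _
    _ = (2^(k+1))⁻¹ := by rw [pow_succ]; ring

lemma summable_g (c : ℕ) (t : ℝ) : Summable fun k : ℕ => g (k + c) t := by
  refine Summable.of_nonneg_of_le (fun k => g_nonneg _ _) (fun k => ?_) summable_geometric_two
  refine (g_le_half _ _).trans ?_
  rw [one_div, inv_pow]
  exact inv_anti₀ (by positivity) (pow_le_pow_right₀ one_le_two (by omega))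

lemma notD (x : ℝ) (hx : x ∉ Ddyadic) (k : ℕ) (j : ℤ) : x ≠ (j:ℝ)/2^k :=
  fun h => hx (Set.mem_iUnion.2 ⟨k, ⟨j, h⟩⟩)

lemma floor_strict (x : ℝ) (hx : x ∉ Ddyadic) (k : ℕ) : ((⌊(2:ℝ)^k * x⌋ : ℝ)) < 2^k * x := by
  have hp : (0:ℝ) < 2^k := by positivity
  rcases eq_or_lt_of_le (Int.floor_le ((2:ℝ)^k * x)) with h | h
  · exact absurd (by rw [eq_div_iff hp.ne', mul_comm]; exact h.symm)
      (notD x hx k ⌊(2:ℝ)^k * x⌋)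
  · exact h

lemma level_cases (x : ℝ) (hx : x ∉ Ddyadic) (ℓ : ℕ) :
    (∃ q : ℤ, (2*(q:ℝ) < 2^(ℓ+1)*x ∧ 2^(ℓ+1)*x < 2*(q:ℝ)+1) ∧ deriv (g ℓ) x = 1 ∧
      ∀ t : ℝ, 2*(q:ℝ) ≤ 2^(ℓ+1)*t → 2^(ℓ+1)*t ≤ 2*(q:ℝ)+1 → g ℓ t = t - (q:ℝ)/2^ℓ) ∨
    (∃ q : ℤ, (2*(q:ℝ)+1 < 2^(ℓ+1)*x ∧ 2^(ℓ+1)*x < 2*(q:ℝ)+2) ∧ deriv (g ℓ) x = -1 ∧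
      ∀ t : ℝ, 2*(q:ℝ)+1 ≤ 2^(ℓ+1)*t → 2^(ℓ+1)*t ≤ 2*(q:ℝ)+2 → g ℓ t = ((q:ℝ)+1)/2^ℓ - t) := by
  have hp : (0:ℝ) < 2^(ℓ+1) := by positivity
  have hpl : (0:ℝ) < 2^ℓ := by positivity
  set p : ℤ := ⌊(2:ℝ)^(ℓ+1) * x⌋ with hpdef
  have h1 : (p:ℝ) < 2^(ℓ+1)*x := floor_strict x hx (ℓ+1)
  have h2 : 2^(ℓ+1)*x < (p:ℝ) + 1 := Int.lt_floor_add_one _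
  rcases Int.even_or_odd p with ⟨q, hq⟩ | ⟨q, hq⟩
  · left
    have hqr : (p:ℝ) = 2*(q:ℝ) := by rw [hq]; push_cast; ring
    rw [hqr] at h1 h2
    have F : ∀ t : ℝ, 2*(q:ℝ) ≤ 2^(ℓ+1)*t → 2^(ℓ+1)*t ≤ 2*(q:ℝ)+1 →
        g ℓ t = t - (q:ℝ)/2^ℓ := by
      intro t ht1 ht2
      rw [pow_succ, mul_comm ((2:ℝ)^ℓ) 2, mul_assoc] at ht1 ht2
      exact g_eq_left ℓ q t (by linarith) (by linarith)
    refine ⟨q, ⟨h1, h2⟩, ?_, F⟩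
    have hU : x ∈ Ioo (2*(q:ℝ)/2^(ℓ+1)) ((2*(q:ℝ)+1)/2^(ℓ+1)) := by
      constructor
      · rw [div_lt_iff₀ hp]; linarith
      · rw [lt_div_iff₀ hp]; linarith
    have heq : g ℓ =ᶠ[nhds x] fun t => t - (q:ℝ)/2^ℓ := by
      refine Filter.eventuallyEq_of_mem (isOpen_Ioo.mem_nhds hU) ?_
      intro t ht
      refine F t ?_ ?_
      · have h := ht.1.le; rw [div_le_iff₀ hp] at h
        linarith [mul_comm t ((2:ℝ)^(ℓ+1))]
      · have h := ht.2.le; rw [le_div_iff₀ hp] at h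
        linarith [mul_comm t ((2:ℝ)^(ℓ+1))]
    rw [heq.deriv_eq, deriv_sub_const]
    simp
  · right
    have hqr : (p:ℝ) = 2*(q:ℝ)+1 := by rw [hq]; push_cast; ring
    rw [hqr] at h1 h2
    have F : ∀ t : ℝ, 2*(q:ℝ)+1 ≤ 2^(ℓ+1)*t → 2^(ℓ+1)*t ≤ 2*(q:ℝ)+2 →
        g ℓ t = ((q:ℝ)+1)/2^ℓ - t := by
      intro t ht1 ht2
      rw [pow_succ, mul_comm ((2:ℝ)^ℓ) 2, mul_assoc] at ht1 ht2
      exact g_eq_right ℓ q t (by linarith) (by linarith)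
    refine ⟨q, ⟨by linarith, by linarith⟩, ?_, F⟩
    have hU : x ∈ Ioo ((2*(q:ℝ)+1)/2^(ℓ+1)) ((2*(q:ℝ)+2)/2^(ℓ+1)) := by
      constructor
      · rw [div_lt_iff₀ hp]; linarith
      · rw [lt_div_iff₀ hp]; linarith
    have heq : g ℓ =ᶠ[nhds x] fun t => ((q:ℝ)+1)/2^ℓ - t := by
      refine Filter.eventuallyEq_of_mem (isOpen_Ioo.mem_nhds hU) ?_
      intro t ht
      refine F t ?_ ?_
      · have h := ht.1.le; rw [div_le_iff₀ hp] at h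
        linarith [mul_comm t ((2:ℝ)^(ℓ+1))]
      · have h := ht.2.le; rw [le_div_iff₀ hp] at h
        linarith [mul_comm t ((2:ℝ)^(ℓ+1))]
    rw [heq.deriv_eq, deriv_const_sub]
    simp

lemma nested (x : ℝ) (n ℓ : ℕ) (hℓ : ℓ + 1 ≤ n) (j m : ℤ) (hm : m = ⌊(2:ℝ)^n * x⌋)
    (hj1 : (j:ℝ) < 2^(ℓ+1)*x) (hj2 : 2^(ℓ+1)*x < (j:ℝ)+1) :
    ∀ t : ℝ, (m:ℝ) ≤ 2^n*t → 2^n*t ≤ (m:ℝ)+1 →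
      (j:ℝ) ≤ 2^(ℓ+1)*t ∧ 2^(ℓ+1)*t ≤ (j:ℝ)+1 := by
  obtain ⟨e, he⟩ : ∃ e, n = (ℓ+1) + e := ⟨n - (ℓ+1), by omega⟩
  have h2e : (0:ℝ) < 2^e := by positivity
  have key1 : ((j * 2^e : ℤ):ℝ) ≤ (m:ℝ) := by
    have : (j * 2^e : ℤ) ≤ ⌊(2:ℝ)^n * x⌋ := by
      apply Int.le_floor.2
      push_cast
      rw [he, pow_add]
      nlinarith [mul_le_mul_of_nonneg_right hj1.le h2e.le]
    rw [hm]; exact_mod_cast this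
  have key2 : (m:ℝ) + 1 ≤ ((j+1) * 2^e : ℤ) := by
    have : ⌊(2:ℝ)^n * x⌋ < (j+1)*2^e := by
      apply Int.floor_lt.2
      push_cast
      rw [he, pow_add]
      nlinarith [mul_lt_mul_of_pos_right hj2 h2e]
    have : m + 1 ≤ (j+1)*2^e := by omega
    exact_mod_cast this
  intro t ht1 ht2
  rw [he, pow_add] at ht1 ht2
  constructor
  · have hc : ((j * 2^e : ℤ):ℝ) = (j:ℝ) * 2^e := by push_cast; ring
    rw [hc] at key1
    have : (j:ℝ) * 2^e ≤ (2^(ℓ+1)*t) * 2^e := by nlinarith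
    exact le_of_mul_le_mul_right this h2e
  · have hc : (((j+1) * 2^e : ℤ):ℝ) = ((j:ℝ)+1) * 2^e := by push_cast; ring
    rw [hc] at key2
    have : (2^(ℓ+1)*t) * 2^e ≤ ((j:ℝ)+1) * 2^e := by nlinarith
    exact le_of_mul_le_mul_right this h2e

set_option maxHeartbeats 2000000 in
theorem takagi_lower_slope_measure (x : ℝ) (hx : x ∉ Ddyadic)
    (n : ℕ) (hn : 1 ≤ n) (hg : deriv (g n) x = 1) :
    ENNReal.ofReal (((2 : ℝ) ^ (n + 5))⁻¹) ≤
      volume {y : ℝ | 0 < |x - y| ∧ |x - y| < ((2 : ℝ) ^ n)⁻¹ ∧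
        (T y - T x) / (y - x) ≤ G' (n - 1) x + 2 / 5} := by
  have hp : (0:ℝ) < 2^n := by positivity
  set m : ℤ := ⌊(2:ℝ)^n * x⌋ with hm
  have hx1 : (m:ℝ) < 2^n * x := floor_strict x hx n
  have hx2 : 2^n * x < (m:ℝ) + 1 := Int.lt_floor_add_one _
  -- from hg : the fractional part of 2^n x is below 1/2
  have hs : 2^n * x < (m:ℝ) + 1/2 := by
    rcases level_cases x hx n with ⟨q, ⟨hq1, hq2⟩, _, _⟩ | ⟨q, _, hder, _⟩
    · rw [pow_succ] at hq1 hq2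
      have e1 : (q:ℝ) < 2^n * x := by nlinarith
      have e2 : 2^n * x < (q:ℝ) + 1/2 := by nlinarith
      have hqm : m = q := by
        rw [hm]; exact Int.floor_eq_iff.2 ⟨e1.le, by linarith⟩
      rw [hqm]; exact e2
    · rw [hg] at hder; norm_num at hder
  -- linearity of low levels on the level-n dyadic interval around x
  have hkey : ∀ ℓ : ℕ, ℓ + 1 ≤ n → ∀ t : ℝ, (m:ℝ) ≤ 2^n*t → 2^n*t ≤ (m:ℝ)+1 →
      g ℓ t - g ℓ x = deriv (g ℓ) x * (t - x) := by
    intro ℓ hℓ t ht1 ht2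
    rcases level_cases x hx ℓ with ⟨q, ⟨hq1, hq2⟩, hder, F⟩ | ⟨q, ⟨hq1, hq2⟩, hder, F⟩
    · have hb := nested x n ℓ hℓ (2*q) m hm (by push_cast; linarith) (by push_cast; linarith)
      obtain ⟨c1, c2⟩ := hb t ht1 ht2
      obtain ⟨d1, d2⟩ := hb x hx1.le hx2.le
      push_cast at c1 c2 d1 d2
      rw [F t (by linarith) (by linarith), F x (by linarith) (by linarith), hder]
      ring
    · have hb := nested x n ℓ hℓ (2*q+1) m hm (by push_cast; linarith) (by push_cast; linarith)
      obtain ⟨c1, c2⟩ := hb t ht1 ht2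
      obtain ⟨d1, d2⟩ := hb x hx1.le hx2.le
      push_cast at c1 c2 d1 d2
      rw [F t (by linarith) (by linarith), F x (by linarith) (by linarith), hder]
      ring
  -- decomposition of T
  have hdec : ∀ t : ℝ, T t = (∑ k ∈ Finset.range (n-1), g (k+1) t) + ∑' j : ℕ, g (j + n) t := by
    intro t
    have h := Summable.sum_add_tsum_nat_add (f := fun k => g (k+1) t) (n-1) (summable_g 1 t)
    simp only [T]
    rw [← h]
    congr 1
    exact tsum_congr fun i => by
      show g (i + (n-1) + 1) t = g (i + n) t
      rw [show i + (n-1) + 1 = i + n from by omega]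
  -- lower bound for the tail at x
  have hRx : x - (m:ℝ)/2^n ≤ ∑' j : ℕ, g (j + n) x := by
    have h0 := Summable.le_tsum (summable_g n x) 0 (fun j _ => g_nonneg _ _)
    have hgn : g (0 + n) x = x - (m:ℝ)/2^n := by
      rw [Nat.zero_add]
      exact g_eq_left n m x hx1.le (by linarith)
    rw [hgn] at h0
    exact h0
  -- upper bound for the tail on the right part of the interval
  have hRy : ∀ y : ℝ, (m:ℝ)/2^n < y → y < ((m:ℝ)+1)/2^n →
      ∑' j : ℕ, g (j + n) y ≤ 4*(((m:ℝ)+1)/2^n - y) + (2^n)⁻¹ * (1/16) := by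
    intro y hy1 hy2
    have hd : ∀ j : ℕ, g (j + n) y ≤ ((m:ℝ)+1)/2^n - y := by
      intro j
      have hmem : ((((m+1) * 2^j : ℤ)):ℝ)/2^(j+n) = ((m:ℝ)+1)/2^n := by
        push_cast
        rw [pow_add]
        field_simp
      have h := g_le_dist (j+n) ((m+1)*2^j) y
      rw [hmem, abs_sub_comm, abs_of_nonneg (by linarith)] at h
      exact h
    have hsplit := Summable.sum_add_tsum_nat_add (f := fun j => g (j + n) y) 4 (summable_g n y)
    have hsb : Summable fun j : ℕ => g (j + 4 + n) y := by
      have h := summable_g (4+n) y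
      have he : (fun j : ℕ => g (j + (4+n)) y) = fun j : ℕ => g (j + 4 + n) y := by
        funext j; congr 1; omega
      rwa [he] at h
    have htail : ∑' j : ℕ, g (j + 4 + n) y ≤ (2^n)⁻¹ * (1/16) := by
      have hone : ∀ j : ℕ, g (j + 4 + n) y ≤ (1/2:ℝ)^j * ((2^n)⁻¹ * (1/32)) := by
        intro j
        refine (g_le_half _ _).trans (le_of_eq ?_)
        rw [show j + 4 + n + 1 = j + n + 5 from by omega, pow_add, pow_add]
        simp only [one_div, mul_inv, inv_pow]
        norm_num
        ring
      calc ∑' j : ℕ, g (j + 4 + n) y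
          ≤ ∑' j : ℕ, (1/2:ℝ)^j * ((2^n)⁻¹ * (1/32)) :=
            Summable.tsum_le_tsum hone hsb (summable_geometric_two.mul_right _)
        _ = 2 * ((2^n)⁻¹ * (1/32)) := by rw [tsum_mul_right, tsum_geometric_two]
        _ = (2^n)⁻¹ * (1/16) := by ring
    have hhead : ∑ j ∈ Finset.range 4, g (j + n) y ≤ 4*(((m:ℝ)+1)/2^n - y) := by
      have h := Finset.sum_le_sum (f := fun j => g (j+n) y)
        (g := fun _ => ((m:ℝ)+1)/2^n - y) (s := Finset.range 4) (fun j _ => hd j)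
      simpa [mul_sub] using h
    calc ∑' j : ℕ, g (j + n) y
        = (∑ j ∈ Finset.range 4, g (j + n) y) + ∑' j : ℕ, g (j + 4 + n) y := by
          exact hsplit.symm
      _ ≤ 4*(((m:ℝ)+1)/2^n - y) + (2^n)⁻¹ * (1/16) := add_le_add hhead htail
  -- reduce to an explicit interval
  have hvol : ENNReal.ofReal (((2:ℝ)^(n+5))⁻¹)
      = volume (Ioo (((m:ℝ)+15/16)/2^n) (((m:ℝ)+31/32)/2^n)) := by
    rw [Real.volume_Ioo]
    congr 1
    rw [pow_add]
    field_simp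
    ring
  rw [hvol]
  apply measure_mono
  rintro y ⟨hy1, hy2⟩
  have hy1' : (m:ℝ) + 15/16 < 2^n * y := by
    rw [div_lt_iff₀ hp] at hy1; linarith [mul_comm y ((2:ℝ)^n)]
  have hy2' : 2^n * y < (m:ℝ) + 31/32 := by
    rw [lt_div_iff₀ hp] at hy2; linarith [mul_comm y ((2:ℝ)^n)]
  have hxy : x < y := by
    have h2 : 2^n * x < 2^n * y := by linarith
    exact (mul_lt_mul_iff_right₀ hp).1 h2
  have habs : |x - y| = y - x := by rw [abs_sub_comm]; exact abs_of_pos (by linarith)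
  refine ⟨by rw [habs]; linarith, ?_, ?_⟩
  · rw [habs]
    have h1 : 2^n * (y - x) < 1 := by rw [mul_sub]; linarith
    calc y - x = (2^n)⁻¹ * (2^n * (y-x)) := by field_simp
      _ < (2^n)⁻¹ * 1 := mul_lt_mul_of_pos_left h1 (by positivity)
      _ = (2^n)⁻¹ := mul_one _
  · rw [div_le_iff₀ (by linarith : (0:ℝ) < y - x)]
    have hylo : (m:ℝ) ≤ 2^n*y := by linarith
    have hyhi : 2^n*y ≤ (m:ℝ)+1 := by linarith
    have hsum_eq : (∑ k ∈ Finset.range (n-1), g (k+1) y) - (∑ k ∈ Finset.range (n-1), g (k+1) x)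
        = G' (n-1) x * (y - x) := by
      rw [← Finset.sum_sub_distrib, G', Finset.sum_mul]
      refine Finset.sum_congr rfl fun k hk => ?_
      have hk' := Finset.mem_range.1 hk
      exact hkey (k+1) (by omega) y hylo hyhi
    have hry := hRy y (by rw [div_lt_iff₀ hp]; linarith [mul_comm y ((2:ℝ)^n)])
      (by rw [lt_div_iff₀ hp]; linarith [mul_comm y ((2:ℝ)^n)])
    -- atoms : A = m/2^n, tinv = (2^n)⁻¹
    have htp : (0:ℝ) < (2^n:ℝ)⁻¹ := by positivity
    have e3 : ((m:ℝ)+1)/2^n = (m:ℝ)/2^n + (2^n)⁻¹ := by ring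
    rw [e3] at hry
    have hxA1 : (m:ℝ)/2^n < x := by
      rw [div_lt_iff₀ hp]; linarith [mul_comm x ((2:ℝ)^n)]
    have hxA2 : x < (m:ℝ)/2^n + (1/2) * (2^n)⁻¹ := by
      have h : x < ((m:ℝ)+1/2)/2^n := by
        rw [lt_div_iff₀ hp]; linarith [mul_comm x ((2:ℝ)^n)]
      have h2 : ((m:ℝ)+1/2)/2^n = (m:ℝ)/2^n + (1/2) * (2^n)⁻¹ := by ring
      linarith [h2 ▸ h]
    have hyA1 : (m:ℝ)/2^n + (15/16) * (2^n)⁻¹ < y := by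
      have h2 : ((m:ℝ)+15/16)/2^n = (m:ℝ)/2^n + (15/16) * (2^n)⁻¹ := by ring
      linarith [h2 ▸ hy1]
    have hyA2 : y < (m:ℝ)/2^n + (31/32) * (2^n)⁻¹ := by
      have h2 : ((m:ℝ)+31/32)/2^n = (m:ℝ)/2^n + (31/32) * (2^n)⁻¹ := by ring
      linarith [h2 ▸ hy2]
    rw [hdec y, hdec x]
    linarith [hsum_eq, hRx, hry, htp, hxA1, hxA2, hyA1, hyA2]
end
end
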